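/- Let k : ℝⁿ × ℝⁿ → ℝ be a measurable kernel for which there exist C, δ > 0 such that |k(x,y) − k(x',y)| ≤ C·|x − x'|^δ / |x − y|^{n+δ} whenever x, x' ∈ Q and y ∈ (2Q)^c for some cube Q. Let 0 < s ≤ 1/2, 1/2 ≤ t ≤ 1−s, let Q be a cube with center x_Q, let f be a locally integrable function, and suppose ∫_{(2Q)^c} |f(y) − m_f(t,Q)| / |z − y|^{n+δ} dy < ∞ for z ∈ Q. Then there is a constant c = c_{n,δ,s} (also depending on C) such that for every z ∈ Q, |∫_{(2Q)^c} (k(z,y) − k(x_Q,y)) (f(y) − m_f(t,Q)) dy| ≤ c · inf_{y ∈ Q} M♯f(y). -/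

import Mathlib

open MeasureTheory ENNReal

namespace LocalMedian

/-- Euclidean space `ℝⁿ`. -/
abbrev Sp (n : ℕ) := EuclideanSpace ℝ (Fin n)

/-- An axis-parallel cube in `ℝⁿ`, given by its lower corner and (positive) sidelength. -/
structure Cube (n : ℕ) where
  corner : Sp n
  side : ℝ
  side_pos : 0 < side

namespace Cube

variable {n : ℕ}

/-- The set of points of the cube. -/
def set (Q : Cube n) : Set (Sp n) :=
  {x | ∀ i, Q.corner i ≤ x i ∧ x i ≤ Q.corner i + Q.side}

/-- The center of the cube. -/
noncomputable def center (Q : Cube n) : Sp n := WithLp.toLp 2 (fun i => Q.corner i + Q.side / 2)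

/-- The cube concentric with `Q` whose sidelength is `r` times that of `Q`. -/
noncomputable def dilate (Q : Cube n) (r : ℝ) (hr : 0 < r) : Cube n where
  corner := WithLp.toLp 2 (fun i => Q.center i - r * Q.side / 2)
  side := r * Q.side
  side_pos := mul_pos hr Q.side_pos

/-- `Q` is a dyadic subcube of `Q₀`, i.e. obtained from `Q₀` by repeated dyadic
subdivision into `2ⁿ` congruent subcubes. -/
def dyadicSub (Q₀ Q : Cube n) : Prop :=
  ∃ (k : ℕ) (m : Fin n → ℕ), (∀ i, m i < 2 ^ k) ∧
    Q.side = Q₀.side / 2 ^ k ∧ ∀ i, Q.corner i = Q₀.corner i + Q.side * m i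

/-- `Q` is one of the `2ⁿ` dyadic children of `P` (so `P` is the dyadic parent of `Q`). -/
def isDyadicChild (Q P : Cube n) : Prop :=
  Q.side = P.side / 2 ∧ ∃ m : Fin n → ℕ, (∀ i, m i < 2) ∧
    ∀ i, Q.corner i = P.corner i + Q.side * m i

end Cube

variable {n : ℕ}

/-- The (maximal) median of `f` over the cube `Q` with parameter `t`:
`m_f(t,Q) = sup { M : |{y ∈ Q : f y < M}| ≤ t|Q| }`. -/
noncomputable def median (f : Sp n → ℝ) (t : ℝ) (Q : Cube n) : ℝ :=
  sSup {M : ℝ | volume {y ∈ Q.set | f y < M} ≤ ENNReal.ofReal t * volume Q.set}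

/-- The local oscillation `inf_c inf {α ≥ 0 : |{y ∈ Q : |f y - c| > α}| < s|Q|}`. -/
noncomputable def osc (f : Sp n → ℝ) (s : ℝ) (Q : Cube n) : ℝ :=
  ⨅ c : ℝ, sInf {α : ℝ | 0 ≤ α ∧
    volume {y ∈ Q.set | α < |f y - c|} < ENNReal.ofReal s * volume Q.set}

/-- The local sharp maximal function `M♯_{0,s,Q₀} f`, restricted to the cube `Q₀`. -/
noncomputable def sharpLoc (f : Sp n → ℝ) (s : ℝ) (Q₀ : Cube n) (x : Sp n) : ℝ≥0∞ :=
  ⨆ Q : {Q : Cube n // x ∈ Q.set ∧ Q.set ⊆ Q₀.set}, ENNReal.ofReal (osc f s Q.1)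

/-- The local sharp maximal function `M♯_{0,s} f` (over all cubes containing `x`). -/
noncomputable def sharp (f : Sp n → ℝ) (s : ℝ) (x : Sp n) : ℝ≥0∞ :=
  ⨆ Q : {Q : Cube n // x ∈ Q.set}, ENNReal.ofReal (osc f s Q.1)

/-- The Hardy–Littlewood maximal function (over cubes containing `x`). -/
noncomputable def maximal (f : Sp n → ℝ) (x : Sp n) : ℝ≥0∞ :=
  ⨆ Q : {Q : Cube n // x ∈ Q.set},
    (∫⁻ y in Q.1.set, ENNReal.ofReal |f y|) / volume Q.1.set

/-- The Hardy–Littlewood maximal function of an `ℝ≥0∞`-valued function. -/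
noncomputable def maximalE (g : Sp n → ℝ≥0∞) (x : Sp n) : ℝ≥0∞ :=
  ⨆ Q : {Q : Cube n // x ∈ Q.set}, (∫⁻ y in Q.1.set, g y) / volume Q.1.set

/-- The average `(1/|Q|) ∫_Q g`. -/
noncomputable def cubeAvg (g : Sp n → ℝ) (Q : Cube n) : ℝ :=
  (volume Q.set).toReal⁻¹ * ∫ y in Q.set, g y

/-- The Fefferman–Stein sharp maximal function
`M♯ g(x) = sup_{Q ∋ x} (1/|Q|) ∫_Q |g - g_Q|`. -/
noncomputable def fsSharp (g : Sp n → ℝ) (x : Sp n) : ℝ≥0∞ :=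
  ⨆ Q : {Q : Cube n // x ∈ Q.set},
    ENNReal.ofReal (cubeAvg (fun y => |g y - cubeAvg g Q.1|) Q.1)


namespace Cube

theorem mem_set_iff_abs (Q : Cube n) (x : Sp n) :
    x ∈ Q.set ↔ ∀ i, |x i - Q.center i| ≤ Q.side / 2 := by
  unfold set center
  simp only [Set.mem_setOf_eq, abs_le]
  constructor <;> intro h i <;> have := h i <;> constructor <;> linarith [this.1, this.2]

theorem mem_dilate_iff_abs (Q : Cube n) (r : ℝ) (hr : 0 < r) (x : Sp n) :
    x ∈ (Q.dilate r hr).set ↔ ∀ i, |x i - Q.center i| ≤ r * Q.side / 2 := by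
  unfold set center dilate
  simp only [Set.mem_setOf_eq, abs_le]
  constructor <;> intro h i <;> have := h i <;> constructor <;>
    simp only [center] at * <;> linarith [this.1, this.2]

theorem set_eq_preimage (Q : Cube n) :
    Q.set = (MeasurableEquiv.toLp 2 (Fin n → ℝ)).symm ⁻¹'
      (Set.univ.pi fun i => Set.Icc (Q.corner i) (Q.corner i + Q.side)) := by
  ext x
  constructor
  · intro h i _; exact ⟨(h i).1, (h i).2⟩
  · intro h i; exact (h i (Set.mem_univ i))

theorem volume_set (Q : Cube n) : volume Q.set = ENNReal.ofReal (Q.side ^ n) := by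
  rw [set_eq_preimage, MeasurePreserving.measure_preimage
    (EuclideanSpace.volume_preserving_symm_measurableEquiv_toLp (Fin n))
    (MeasurableSet.univ_pi fun i => measurableSet_Icc).nullMeasurableSet,
    volume_pi_pi]
  simp [Real.volume_Icc, ← ENNReal.ofReal_pow Q.side_pos.le]

theorem measurableSet_set (Q : Cube n) : MeasurableSet Q.set := by
  rw [set_eq_preimage]
  exact (MeasurableEquiv.toLp 2 (Fin n → ℝ)).symm.measurable
    (MeasurableSet.univ_pi fun i => measurableSet_Icc)

theorem isCompact_set (Q : Cube n) : IsCompact Q.set := by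
  have : Q.set = (EuclideanSpace.equiv (Fin n) ℝ).toHomeomorph ⁻¹'
      (Set.univ.pi fun i => Set.Icc (Q.corner i) (Q.corner i + Q.side)) := by
    ext x
    constructor
    · intro h i _; exact ⟨(h i).1, (h i).2⟩
    · intro h i; exact (h i (Set.mem_univ i))
  rw [this, (EuclideanSpace.equiv (Fin n) ℝ).toHomeomorph.isCompact_preimage]
  exact isCompact_univ_pi fun i => isCompact_Icc

theorem center_mem_set (Q : Cube n) : Q.center ∈ Q.set := by
  rw [mem_set_iff_abs]
  intro i
  simp only [sub_self, abs_zero]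
  linarith [Q.side_pos]

theorem volume_set_toReal (Q : Cube n) : (volume Q.set).toReal = Q.side ^ n := by
  rw [volume_set, ENNReal.toReal_ofReal (pow_nonneg Q.side_pos.le n)]

theorem volume_set_toReal_pos (Q : Cube n) : 0 < (volume Q.set).toReal := by
  rw [volume_set_toReal]; exact pow_pos Q.side_pos n

theorem volume_set_ne_top (Q : Cube n) : volume Q.set ≠ ⊤ := by
  rw [volume_set]; exact ENNReal.ofReal_ne_top

theorem volume_set_lt_top (Q : Cube n) : volume Q.set < ⊤ :=
  lt_top_iff_ne_top.mpr Q.volume_set_ne_top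

theorem volume_set_pos (Q : Cube n) : 0 < volume Q.set := by
  rw [volume_set]; exact ENNReal.ofReal_pos.mpr (pow_pos Q.side_pos n)

theorem dilate_subset_dilate (Q : Cube n) {r r' : ℝ} (h1 : 0 < r) (h2 : r ≤ r') :
    (Q.dilate r h1).set ⊆ (Q.dilate r' (lt_of_lt_of_le h1 h2)).set := by
  intro x hx
  rw [mem_dilate_iff_abs] at hx ⊢
  intro i
  refine (hx i).trans ?_
  have := Q.side_pos
  nlinarith

theorem subset_dilate (Q : Cube n) {r : ℝ} (hr : 0 < r) (hr1 : 1 ≤ r) :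
    Q.set ⊆ (Q.dilate r hr).set := by
  intro x hx
  rw [mem_dilate_iff_abs]
  rw [mem_set_iff_abs] at hx
  intro i
  refine (hx i).trans ?_
  have := Q.side_pos
  nlinarith

theorem dilate_one_set (Q : Cube n) (h : (0:ℝ) < 1) : (Q.dilate 1 h).set = Q.set := by
  ext x
  rw [mem_dilate_iff_abs, mem_set_iff_abs]
  simp

end Cube
variable {n : ℕ}
open Cube

theorem coord_abs_le_norm (v : Sp n) (i : Fin n) : |v i| ≤ ‖v‖ := by
  rw [EuclideanSpace.norm_eq]
  have h1 : |v i| = Real.sqrt (‖v i‖ ^ 2) := by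
    rw [Real.sqrt_sq_eq_abs, Real.norm_eq_abs, abs_abs]
  rw [h1]
  apply Real.sqrt_le_sqrt
  exact Finset.single_le_sum (f := fun j => ‖v j‖ ^ 2) (fun j _ => by positivity)
    (Finset.mem_univ i)

theorem norm_le_of_coords (v : Sp n) (b : ℝ) (hb : 0 ≤ b) (h : ∀ i, |v i| ≤ b) :
    ‖v‖ ≤ Real.sqrt n * b := by
  rw [EuclideanSpace.norm_eq]
  have hsum : ∑ i : Fin n, ‖v i‖ ^ 2 ≤ n * b ^ 2 := by
    calc ∑ i : Fin n, ‖v i‖ ^ 2 ≤ ∑ _i : Fin n, b ^ 2 := by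
          apply Finset.sum_le_sum
          intro i _
          have h2 : ‖v i‖ ≤ b := h i
          nlinarith [norm_nonneg (v i)]
      _ = n * b ^ 2 := by simp [Finset.sum_const, mul_comm]
  calc Real.sqrt (∑ i : Fin n, ‖v i‖ ^ 2) ≤ Real.sqrt (n * b ^ 2) := Real.sqrt_le_sqrt hsum
    _ = Real.sqrt n * b := by
        rw [Real.sqrt_mul (by positivity), Real.sqrt_sq hb]

theorem cubeAvg_nonneg {g : Sp n → ℝ} (hg : ∀ y, 0 ≤ g y) (Q : Cube n) :
    0 ≤ cubeAvg g Q :=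
  mul_nonneg (inv_nonneg.mpr ENNReal.toReal_nonneg) (integral_nonneg hg)

theorem cubeAvg_congr (g : Sp n → ℝ) {P P' : Cube n} (h : P.set = P'.set) :
    cubeAvg g P = cubeAvg g P' := by
  unfold cubeAvg; rw [h]

theorem avg_abs_le (f : Sp n → ℝ) (P : Cube n) {y₀ : Sp n} (hy : y₀ ∈ P.set)
    (hA : fsSharp f y₀ ≠ ⊤) :
    cubeAvg (fun y => |f y - cubeAvg f P|) P ≤ (fsSharp f y₀).toReal := by
  have h := le_iSup (fun (R : {R : Cube n // y₀ ∈ R.set}) =>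
    ENNReal.ofReal (cubeAvg (fun y => |f y - cubeAvg f R.1|) R.1)) ⟨P, hy⟩
  exact (ENNReal.ofReal_le_iff_le_toReal hA).mp h

theorem integral_abs_sub_avg_le (f : Sp n → ℝ) (P : Cube n) {y₀ : Sp n} (hy : y₀ ∈ P.set)
    (hA : fsSharp f y₀ ≠ ⊤) :
    ∫ y in P.set, |f y - cubeAvg f P| ≤
      (volume P.set).toReal * (fsSharp f y₀).toReal := by
  have h := avg_abs_le f P hy hA
  unfold cubeAvg at h
  have hV := P.volume_set_toReal_pos
  set V := (volume P.set).toReal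
  set I := ∫ y in P.set, |f y - (volume P.set).toReal⁻¹ * ∫ y in P.set, f y|
  calc (∫ y in P.set, |f y - cubeAvg f P|) = I := by unfold cubeAvg; rfl
    _ = V * (V⁻¹ * I) := by field_simp
    _ ≤ V * (fsSharp f y₀).toReal := mul_le_mul_of_nonneg_left h hV.le

theorem cubeAvg_sub_const {f : Sp n → ℝ} {P : Cube n} (hf : IntegrableOn f P.set volume)
    (c : ℝ) : cubeAvg (fun y => f y - c) P = cubeAvg f P - c := by
  unfold cubeAvg
  rw [integral_sub hf (integrableOn_const P.volume_set_ne_top),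
    setIntegral_const, smul_eq_mul, measureReal_def]
  have hV := P.volume_set_toReal_pos
  field_simp

theorem abs_cubeAvg_le (g : Sp n → ℝ) (P : Cube n) :
    |cubeAvg g P| ≤ cubeAvg (fun y => |g y|) P := by
  unfold cubeAvg
  rw [abs_mul, abs_of_nonneg (inv_nonneg.mpr ENNReal.toReal_nonneg)]
  apply mul_le_mul_of_nonneg_left _ (inv_nonneg.mpr ENNReal.toReal_nonneg)
  have := MeasureTheory.norm_integral_le_integral_norm (μ := volume.restrict P.set) g
  simpa [Real.norm_eq_abs] using this

theorem avg_diff_le {f : Sp n → ℝ} (hf : LocallyIntegrable f volume) {P P' : Cube n}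
    (hPP' : P.set ⊆ P'.set) {y₀ : Sp n} (hy : y₀ ∈ P'.set) (hA : fsSharp f y₀ ≠ ⊤) :
    |cubeAvg f P - cubeAvg f P'| ≤
      (volume P.set).toReal⁻¹ * ((volume P'.set).toReal * (fsSharp f y₀).toReal) := by
  have hfP : IntegrableOn f P.set volume := hf.integrableOn_isCompact P.isCompact_set
  have hfP' : IntegrableOn f P'.set volume := hf.integrableOn_isCompact P'.isCompact_set
  set c' := cubeAvg f P'
  have habs : IntegrableOn (fun y => |f y - c'|) P'.set volume :=
    (hfP'.sub (integrableOn_const P'.volume_set_ne_top)).abs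
  calc |cubeAvg f P - c'| = |cubeAvg (fun y => f y - c') P| := by
        rw [cubeAvg_sub_const hfP]
    _ ≤ cubeAvg (fun y => |f y - c'|) P := abs_cubeAvg_le _ P
    _ = (volume P.set).toReal⁻¹ * ∫ y in P.set, |f y - c'| := rfl
    _ ≤ (volume P.set).toReal⁻¹ * ∫ y in P'.set, |f y - c'| := by
        apply mul_le_mul_of_nonneg_left _ (inv_nonneg.mpr ENNReal.toReal_nonneg)
        apply setIntegral_mono_set habs
        · filter_upwards with y using abs_nonneg _
        · exact HasSubset.Subset.eventuallyLE hPP'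
    _ ≤ (volume P.set).toReal⁻¹ * ((volume P'.set).toReal * (fsSharp f y₀).toReal) := by
        apply mul_le_mul_of_nonneg_left _ (inv_nonneg.mpr ENNReal.toReal_nonneg)
        exact integral_abs_sub_avg_le f P' hy hA

theorem two_pow_pos (j : ℕ) : (0:ℝ) < 2 ^ j := by positivity

theorem avg_chain {f : Sp n → ℝ} (hf : LocallyIntegrable f volume) (Q : Cube n)
    {y₀ : Sp n} (hy : y₀ ∈ Q.set) (hA : fsSharp f y₀ ≠ ⊤) (j : ℕ) :
    |cubeAvg f (Q.dilate (2 ^ j) (two_pow_pos j)) - cubeAvg f Q| ≤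
      (j : ℝ) * (2 ^ n * (fsSharp f y₀).toReal) := by
  induction j with
  | zero =>
      rw [cubeAvg_congr f (P' := Q) (by simpa using Q.dilate_one_set one_pos)]
      simp
  | succ j ih =>
      set a := (fsSharp f y₀).toReal
      have ha : 0 ≤ a := ENNReal.toReal_nonneg
      have hsub : (Q.dilate (2 ^ j) (two_pow_pos j)).set ⊆
          (Q.dilate (2 ^ (j+1)) (two_pow_pos (j+1))).set :=
        Q.dilate_subset_dilate (two_pow_pos j) (by
          have : (2:ℝ) ^ j ≤ 2 ^ (j+1) := by
            apply pow_le_pow_right₀ (by norm_num) (by omega)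
          exact this)
      have hy' : y₀ ∈ (Q.dilate (2 ^ (j+1)) (two_pow_pos (j+1))).set :=
        Q.subset_dilate (two_pow_pos (j+1)) (one_le_pow₀ (by norm_num)) hy
      have hstep := avg_diff_le hf hsub hy' hA
      have hvol : (volume (Q.dilate (2 ^ j) (two_pow_pos j)).set).toReal⁻¹ *
          ((volume (Q.dilate (2 ^ (j+1)) (two_pow_pos (j+1))).set).toReal * a)
          = 2 ^ n * a := by
        rw [Cube.volume_set_toReal, Cube.volume_set_toReal]
        show ((2 ^ j * Q.side) ^ n)⁻¹ * ((2 ^ (j+1) * Q.side) ^ n * a) = 2 ^ n * a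
        have h1 : ((2:ℝ) ^ (j+1) * Q.side) ^ n = 2 ^ n * (2 ^ j * Q.side) ^ n := by
          rw [pow_succ]
          rw [show (2:ℝ) ^ j * 2 * Q.side = 2 * (2 ^ j * Q.side) by ring, mul_pow]
        rw [h1]
        have h2 : ((2:ℝ) ^ j * Q.side) ^ n ≠ 0 := by
          have := Q.side_pos; positivity
        field_simp
      rw [hvol] at hstep
      calc |cubeAvg f (Q.dilate (2 ^ (j+1)) (two_pow_pos (j+1))) - cubeAvg f Q|
          ≤ |cubeAvg f (Q.dilate (2 ^ (j+1)) (two_pow_pos (j+1))) -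
              cubeAvg f (Q.dilate (2 ^ j) (two_pow_pos j))| +
            |cubeAvg f (Q.dilate (2 ^ j) (two_pow_pos j)) - cubeAvg f Q| := abs_sub_le _ _ _
        _ ≤ 2 ^ n * a + (j : ℝ) * (2 ^ n * a) := by
            refine add_le_add ?_ ih
            rw [abs_sub_comm]; exact hstep
        _ = ((j+1 : ℕ) : ℝ) * (2 ^ n * a) := by push_cast; ring
theorem abs_avg_sub_median_le {f : Sp n → ℝ} (hf : LocallyIntegrable f volume)
    {s t : ℝ} (hs0 : 0 < s) (hs : s ≤ 1 / 2) (ht : 1 / 2 ≤ t) (ht1 : t ≤ 1 - s)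
    (Q : Cube n) {y₀ : Sp n} (hy : y₀ ∈ Q.set) (hA : fsSharp f y₀ ≠ ⊤) :
    |cubeAvg f Q - median f t Q| ≤ (fsSharp f y₀).toReal / s := by
  classical
  set a := (fsSharp f y₀).toReal with ha_def
  have ha : 0 ≤ a := ENNReal.toReal_nonneg
  set c₀ := cubeAvg f Q with hc₀
  set V := volume Q.set with hV
  have hVfin : V ≠ ⊤ := Q.volume_set_ne_top
  set VR := (volume Q.set).toReal with hVR
  have hVRpos : 0 < VR := Q.volume_set_toReal_pos
  -- measurable representative
  have hfm := hf.aestronglyMeasurable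
  set g := hfm.mk f with hg
  have hgm : Measurable g := hfm.stronglyMeasurable_mk.measurable
  have hfg : f =ᵐ[volume] g := hfm.ae_eq_mk
  have hInt : IntegrableOn f Q.set volume := hf.integrableOn_isCompact Q.isCompact_set
  have hIc : IntegrableOn (fun y => |f y - c₀|) Q.set volume :=
    (hInt.sub (integrableOn_const Q.volume_set_ne_top)).abs
  have hIcg : IntegrableOn (fun y => |g y - c₀|) Q.set volume := by
    apply hIc.congr_fun_ae
    filter_upwards [ae_restrict_of_ae hfg] with y hy'
    rw [hy']
  have hD : ∫ y in Q.set, |f y - c₀| ≤ VR * a := integral_abs_sub_avg_le f Q hy hA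
  have hDg : ∫ y in Q.set, |g y - c₀| ≤ VR * a := by
    rw [integral_congr_ae (g := fun y => |f y - c₀|) ?_]
    · exact hD
    · filter_upwards [ae_restrict_of_ae hfg] with y hy'
      rw [hy']
  -- sets
  set S : ℝ → Set (Sp n) := fun M => {y ∈ Q.set | g y < M} with hS
  have hMeq : ∀ M, volume {y ∈ Q.set | f y < M} = volume (S M) := by
    intro M
    apply measure_congr
    rw [Filter.eventuallyEq_set]
    filter_upwards [hfg] with y hy'
    simp only [Set.mem_setOf_eq, hS, hy']
  have hSmeas : ∀ M, MeasurableSet (S M) :=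
    fun M => (Q.measurableSet_set).inter (hgm measurableSet_Iio)
  have hSsub : ∀ M, S M ⊆ Q.set := fun M y hy' => hy'.1
  have hSmono : ∀ {M M'}, M ≤ M' → S M ⊆ S M' :=
    fun h y hy' => ⟨hy'.1, lt_of_lt_of_le hy'.2 h⟩
  have hSfin : ∀ M, volume (S M) ≠ ⊤ :=
    fun M => (lt_of_le_of_lt (measure_mono (hSsub M)) Q.volume_set_lt_top).ne
  set T := {M : ℝ | volume {y ∈ Q.set | f y < M} ≤ ENNReal.ofReal t * V} with hT
  have hmed : median f t Q = sSup T := rfl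
  have ht0 : (0:ℝ) < t := by linarith
  have htV_lt : ENNReal.ofReal t * V < V := by
    rw [hV, Q.volume_set, ← ENNReal.ofReal_mul ht0.le]
    apply ENNReal.ofReal_lt_ofReal_iff (pow_pos Q.side_pos n) |>.mpr
    nlinarith [pow_pos Q.side_pos n]
  -- T bounded above
  obtain ⟨M₁, hM₁⟩ : ∃ M₁ : ℕ, ENNReal.ofReal t * V < volume (S M₁) := by
    have hU : ⋃ j : ℕ, S (j : ℝ) = Q.set := by
      ext y
      constructor
      · rintro ⟨j, hj, hyj⟩
        simp only [Set.mem_range] at hj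
        obtain ⟨i, rfl⟩ := hj
        exact hyj.1
      · intro hyQ
        obtain ⟨j, hj⟩ := exists_nat_gt (g y)
        exact Set.mem_iUnion.mpr ⟨j, hyQ, hj⟩
    have htend : Filter.Tendsto (fun j : ℕ => volume (S j)) Filter.atTop (nhds V) := by
      have := tendsto_measure_iUnion_atTop (μ := volume) (s := fun j : ℕ => S (j : ℝ))
        (fun i j hij => hSmono (by exact_mod_cast hij))
      rwa [hU] at this
    have := htend.eventually (eventually_gt_nhds htV_lt)
    exact this.exists
  have hbdd : BddAbove T := by
    refine ⟨M₁, fun M hM => ?_⟩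
    by_contra hcon
    push_neg at hcon
    have : volume (S (M₁ : ℝ)) ≤ volume (S M) := measure_mono (hSmono hcon.le)
    rw [hT, Set.mem_setOf_eq, hMeq] at hM
    exact absurd (lt_of_lt_of_le hM₁ (this.trans hM)) (lt_irrefl _)
  -- T nonempty
  have hne : T.Nonempty := by
    have htVpos : 0 < ENNReal.ofReal t * V := by
      exact ENNReal.mul_pos (ENNReal.ofReal_pos.mpr ht0).ne' Q.volume_set_pos.ne'
    have hInter : ⋂ m : ℕ, S (-(m : ℝ)) = ∅ := by
      ext y
      simp only [Set.mem_iInter, Set.mem_empty_iff_false, iff_false]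
      intro hall
      obtain ⟨m, hm⟩ := exists_nat_ge (-(g y))
      have := (hall m).2
      linarith
    have htend : Filter.Tendsto (fun m : ℕ => volume (S (-(m : ℝ)))) Filter.atTop
        (nhds 0) := by
      have := tendsto_measure_iInter_atTop (μ := volume)
        (s := fun m : ℕ => S (-(m : ℝ)))
        (fun m => (hSmeas _).nullMeasurableSet)
        (fun i j hij => hSmono (by
          have h' : (i:ℝ) ≤ j := Nat.cast_le.mpr hij
          linarith))
        ⟨0, hSfin _⟩
      rwa [hInter, measure_empty] at this
    have := htend.eventually (eventually_lt_nhds htVpos)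
    obtain ⟨m, hm⟩ := this.exists
    exact ⟨-(m : ℝ), by rw [hT, Set.mem_setOf_eq, hMeq]; exact hm.le⟩
  -- claims
  have claim1 : ∀ M, M < median f t Q → volume (S M) ≤ ENNReal.ofReal t * V := by
    intro M hM
    rw [hmed] at hM
    obtain ⟨M', hM'T, hMM'⟩ := exists_lt_of_lt_csSup hne hM
    calc volume (S M) ≤ volume (S M') := measure_mono (hSmono hMM'.le)
      _ = volume {y ∈ Q.set | f y < M'} := (hMeq M').symm
      _ ≤ ENNReal.ofReal t * V := hM'T
  have claim2 : ∀ M, median f t Q < M → ENNReal.ofReal t * V < volume (S M) := by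
    intro M hM
    by_contra hcon
    push_neg at hcon
    have hMT : M ∈ T := by rw [hT, Set.mem_setOf_eq, hMeq]; exact hcon
    exact absurd (le_csSup hbdd hMT) (not_le.mpr (by rw [← hmed]; exact hM))
  -- Chebyshev
  have cheb : ∀ lam : ℝ, 0 < lam →
      ENNReal.ofReal lam * volume {y ∈ Q.set | lam ≤ |g y - c₀|} ≤
        ENNReal.ofReal (VR * a) := by
    intro lam hlam
    have hmeas : Measurable fun y => ENNReal.ofReal |g y - c₀| :=
      (hgm.sub measurable_const).abs.ennreal_ofReal
    have h1 := mul_meas_ge_le_lintegral₀ (μ := volume.restrict Q.set)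
      hmeas.aemeasurable (ENNReal.ofReal lam)
    have h2 : ∫⁻ y in Q.set, ENNReal.ofReal |g y - c₀| =
        ENNReal.ofReal (∫ y in Q.set, |g y - c₀|) := by
      rw [ofReal_integral_eq_lintegral_ofReal hIcg]
      filter_upwards with y using abs_nonneg _
    have h3 : volume {y ∈ Q.set | lam ≤ |g y - c₀|} ≤
        (volume.restrict Q.set) {x | ENNReal.ofReal lam ≤ ENNReal.ofReal |g x - c₀|} := by
      rw [Measure.restrict_apply
        (measurableSet_le measurable_const hmeas)]
      apply measure_mono
      intro y hy'
      exact ⟨ENNReal.ofReal_le_ofReal hy'.2, hy'.1⟩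
    calc ENNReal.ofReal lam * volume {y ∈ Q.set | lam ≤ |g y - c₀|}
        ≤ ENNReal.ofReal lam *
          (volume.restrict Q.set) {x | ENNReal.ofReal lam ≤ ENNReal.ofReal |g x - c₀|} :=
          mul_le_mul_right h3 _
      _ ≤ ∫⁻ y in Q.set, ENNReal.ofReal |g y - c₀| := h1
      _ = ENNReal.ofReal (∫ y in Q.set, |g y - c₀|) := h2
      _ ≤ ENNReal.ofReal (VR * a) := ENNReal.ofReal_le_ofReal hDg
  have hVeq : V = ENNReal.ofReal (Q.side ^ n) := Q.volume_set
  have hVReq : VR = Q.side ^ n := Q.volume_set_toReal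
  -- part 1 : median - c₀ ≤ a / s
  have part1 : median f t Q - c₀ ≤ a / s := by
    by_contra hcon
    push_neg at hcon
    set lam := (a / s + (median f t Q - c₀)) / 2 with hlam_def
    have hlam1 : a / s < lam := by rw [hlam_def]; linarith
    have hlam2 : lam < median f t Q - c₀ := by rw [hlam_def]; linarith
    have hlam0 : 0 < lam := lt_of_le_of_lt (by positivity) hlam1
    have hMlt : c₀ + lam < median f t Q := by linarith
    have h1 := claim1 _ hMlt
    have hsub2 : Q.set \ S (c₀ + lam) ⊆ {y ∈ Q.set | lam ≤ |g y - c₀|} := by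
      rintro y ⟨hyQ, hyS⟩
      refine ⟨hyQ, ?_⟩
      have : ¬ g y < c₀ + lam := fun h => hyS ⟨hyQ, h⟩
      push_neg at this
      calc lam ≤ g y - c₀ := by linarith
        _ ≤ |g y - c₀| := le_abs_self _
    have hdiff : volume (Q.set \ S (c₀ + lam)) = V - volume (S (c₀ + lam)) := by
      rw [measure_diff (hSsub _) (hSmeas _).nullMeasurableSet (hSfin _)]
    have hlow : ENNReal.ofReal s * V ≤ volume (Q.set \ S (c₀ + lam)) := by
      rw [hdiff]
      apply ENNReal.le_sub_of_add_le_right (hSfin _)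
      calc ENNReal.ofReal s * V + volume (S (c₀ + lam))
          ≤ ENNReal.ofReal s * V + ENNReal.ofReal t * V := add_le_add le_rfl h1
        _ = (ENNReal.ofReal s + ENNReal.ofReal t) * V := by ring
        _ = ENNReal.ofReal (s + t) * V := by rw [ENNReal.ofReal_add hs0.le ht0.le]
        _ ≤ 1 * V := by
            apply mul_le_mul_left
            rw [show (1 : ℝ≥0∞) = ENNReal.ofReal 1 by simp]
            exact ENNReal.ofReal_le_ofReal (by linarith)
        _ = V := one_mul V
    have hfin : ENNReal.ofReal lam * (ENNReal.ofReal s * V) ≤ ENNReal.ofReal (VR * a) := by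
      calc ENNReal.ofReal lam * (ENNReal.ofReal s * V)
          ≤ ENNReal.ofReal lam * volume (Q.set \ S (c₀ + lam)) := mul_le_mul_right hlow _
        _ ≤ ENNReal.ofReal lam * volume {y ∈ Q.set | lam ≤ |g y - c₀|} :=
            mul_le_mul_right (measure_mono hsub2) _
        _ ≤ ENNReal.ofReal (VR * a) := cheb lam hlam0
    rw [hVeq, ← ENNReal.ofReal_mul hs0.le, ← ENNReal.ofReal_mul hlam0.le] at hfin
    have hfinR : lam * (s * Q.side ^ n) ≤ VR * a :=
      (ENNReal.ofReal_le_ofReal_iff (by positivity)).mp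
        (hfin.trans (le_of_eq rfl))
    rw [hVReq] at hfinR
    have hpow : (0:ℝ) < Q.side ^ n := pow_pos Q.side_pos n
    have : lam * s ≤ a := by nlinarith
    have : lam ≤ a / s := (le_div_iff₀ hs0).mpr this
    linarith
  -- part 2 : c₀ - median ≤ 2a
  have part2 : c₀ - median f t Q ≤ 2 * a := by
    by_contra hcon
    push_neg at hcon
    set lam := (2 * a + (c₀ - median f t Q)) / 2 with hlam_def
    have hlam1 : 2 * a < lam := by rw [hlam_def]; linarith
    have hlam2 : lam < c₀ - median f t Q := by rw [hlam_def]; linarith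
    have hlam0 : 0 < lam := lt_of_le_of_lt (by positivity) hlam1
    have hMgt : median f t Q < c₀ - lam := by linarith
    have h1 := claim2 _ hMgt
    have hsub2 : S (c₀ - lam) ⊆ {y ∈ Q.set | lam ≤ |g y - c₀|} := by
      rintro y ⟨hyQ, hyS⟩
      refine ⟨hyQ, ?_⟩
      calc lam ≤ c₀ - g y := by linarith
        _ ≤ |c₀ - g y| := le_abs_self _
        _ = |g y - c₀| := abs_sub_comm _ _
    have hhalf : ENNReal.ofReal (1/2) * V ≤ volume (S (c₀ - lam)) := by
      calc ENNReal.ofReal (1/2) * V ≤ ENNReal.ofReal t * V :=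
            mul_le_mul_left (ENNReal.ofReal_le_ofReal ht) _
        _ ≤ volume (S (c₀ - lam)) := h1.le
    have hfin : ENNReal.ofReal lam * (ENNReal.ofReal (1/2) * V) ≤
        ENNReal.ofReal (VR * a) := by
      calc ENNReal.ofReal lam * (ENNReal.ofReal (1/2) * V)
          ≤ ENNReal.ofReal lam * volume (S (c₀ - lam)) := mul_le_mul_right hhalf _
        _ ≤ ENNReal.ofReal lam * volume {y ∈ Q.set | lam ≤ |g y - c₀|} :=
            mul_le_mul_right (measure_mono hsub2) _
        _ ≤ ENNReal.ofReal (VR * a) := cheb lam hlam0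
    rw [hVeq, ← ENNReal.ofReal_mul (by norm_num : (0:ℝ) ≤ 1/2),
      ← ENNReal.ofReal_mul hlam0.le] at hfin
    have hfinR : lam * (1/2 * Q.side ^ n) ≤ VR * a :=
      (ENNReal.ofReal_le_ofReal_iff (by positivity)).mp hfin
    rw [hVReq] at hfinR
    have hpow : (0:ℝ) < Q.side ^ n := pow_pos Q.side_pos n
    have : lam ≤ 2 * a := by nlinarith
    linarith
  have h2a : 2 * a ≤ a / s := by
    rw [le_div_iff₀ hs0]
    nlinarith
  rw [abs_le]
  constructor <;> linarith
theorem norm_lb (Q : Cube n) {z y : Sp n} (hz : z ∈ Q.set) {j : ℕ}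
    (hy : y ∉ (Q.dilate (2 ^ (j+1)) (two_pow_pos (j+1))).set) :
    2 ^ (j+1) * Q.side / 4 ≤ ‖z - y‖ := by
  rw [Cube.mem_dilate_iff_abs] at hy
  push_neg at hy
  obtain ⟨i, hi⟩ := hy
  have hzc : |z i - Q.center i| ≤ Q.side / 2 := (Q.mem_set_iff_abs z).mp hz i
  have h2 : (2:ℝ) ≤ 2 ^ (j+1) := by
    calc (2:ℝ) = 2 ^ 1 := (pow_one 2).symm
      _ ≤ 2 ^ (j+1) := by apply pow_le_pow_right₀ (by norm_num) (by omega)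
  have htri : |y i - Q.center i| ≤ |y i - z i| + |z i - Q.center i| := abs_sub_le _ _ _
  have hzy : 2 ^ (j+1) * Q.side / 4 ≤ |z i - y i| := by
    rw [abs_sub_comm]
    have := Q.side_pos
    nlinarith
  calc 2 ^ (j+1) * Q.side / 4 ≤ |z i - y i| := hzy
    _ = |(z - y) i| := rfl
    _ ≤ ‖z - y‖ := coord_abs_le_norm _ i

theorem mem_scale_exists (Q : Cube n) (h2 : (0:ℝ) < 2) {x : Sp n}
    (hx : x ∉ (Q.dilate 2 h2).set) :
    ∃ j : ℕ, x ∈ (Q.dilate (2 ^ (j+2)) (two_pow_pos (j+2))).set ∧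
      x ∉ (Q.dilate (2 ^ (j+1)) (two_pow_pos (j+1))).set := by
  classical
  have hside := Q.side_pos
  have hbig : ∃ N : ℕ, x ∈ (Q.dilate (2 ^ N) (two_pow_pos N)).set := by
    obtain ⟨N, hN⟩ := pow_unbounded_of_one_lt (‖x - Q.center‖ * 2 / Q.side)
      (by norm_num : (1:ℝ) < 2)
    refine ⟨N, ?_⟩
    rw [Cube.mem_dilate_iff_abs]
    intro i
    have h1 : |x i - Q.center i| ≤ ‖x - Q.center‖ := coord_abs_le_norm (x - Q.center) i
    have h3 : ‖x - Q.center‖ * 2 / Q.side < 2 ^ N := hN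
    have h4 : ‖x - Q.center‖ ≤ 2 ^ N * Q.side / 2 := by
      rw [div_lt_iff₀ hside] at h3
      nlinarith
    linarith
  set kmin := Nat.find hbig with hkmin
  have hk : x ∈ (Q.dilate (2 ^ kmin) (two_pow_pos kmin)).set := Nat.find_spec hbig
  have hk2 : 2 ≤ kmin := by
    by_contra hcon
    push_neg at hcon
    apply hx
    rw [Cube.mem_dilate_iff_abs]
    rw [Cube.mem_dilate_iff_abs] at hk
    intro i
    refine (hk i).trans ?_
    have : (2:ℝ) ^ kmin ≤ 2 := by
      calc (2:ℝ) ^ kmin ≤ 2 ^ 1 := by apply pow_le_pow_right₀ (by norm_num) (by omega)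
        _ = 2 := pow_one 2
    nlinarith
  refine ⟨kmin - 2, ?_, ?_⟩
  · have hj2 : kmin - 2 + 2 = kmin := by omega
    rw [hj2]
    exact hk
  · have hj1 : kmin - 2 + 1 < kmin := by omega
    exact Nat.find_min hbig hj1

theorem lint_cube {f : Sp n → ℝ} (hf : LocallyIntegrable f volume) {s t : ℝ}
    (hs0 : 0 < s) (hs : s ≤ 1 / 2) (ht : 1 / 2 ≤ t) (ht1 : t ≤ 1 - s)
    (Q : Cube n) {y₀ : Sp n} (hy : y₀ ∈ Q.set) (hA : fsSharp f y₀ ≠ ⊤) (j : ℕ) :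
    ∫⁻ y in (Q.dilate (2 ^ (j+2)) (two_pow_pos (j+2))).set,
        ENNReal.ofReal |f y - median f t Q| ≤
      ENNReal.ofReal ((2 ^ (j+2) * Q.side) ^ n *
        ((2 ^ n * (j:ℝ) + (2 * 2 ^ n + 1 / s + 1)) * (fsSharp f y₀).toReal)) := by
  set P := Q.dilate (2 ^ (j+2)) (two_pow_pos (j+2)) with hP
  set m := median f t Q with hm
  set a := (fsSharp f y₀).toReal with ha_def
  have ha : 0 ≤ a := ENNReal.toReal_nonneg
  set cP := cubeAvg f P with hcP
  have hfP : IntegrableOn f P.set volume := hf.integrableOn_isCompact P.isCompact_set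
  have habs : IntegrableOn (fun y => |f y - cP|) P.set volume :=
    (hfP.sub (integrableOn_const P.volume_set_ne_top)).abs
  have habs2 : IntegrableOn (fun y => |f y - m|) P.set volume :=
    (hfP.sub (integrableOn_const P.volume_set_ne_top)).abs
  have hyP : y₀ ∈ P.set := Q.subset_dilate (two_pow_pos (j+2)) (one_le_pow₀ (by norm_num)) hy
  -- |cP - m|
  have hchain : |cP - cubeAvg f Q| ≤ ((j+2 : ℕ) : ℝ) * (2 ^ n * a) := avg_chain hf Q hy hA (j+2)
  have hmed : |cubeAvg f Q - m| ≤ a / s := abs_avg_sub_median_le hf hs0 hs ht ht1 Q hy hA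
  have hb : |cP - m| ≤ ((j+2 : ℕ) : ℝ) * (2 ^ n * a) + a / s :=
    (abs_sub_le cP (cubeAvg f Q) m).trans (add_le_add hchain hmed)
  have hVP : (volume P.set).toReal = (2 ^ (j+2) * Q.side) ^ n := P.volume_set_toReal
  have hVpos : (0:ℝ) < (2 ^ (j+2) * Q.side) ^ n := by
    have := Q.side_pos; positivity
  -- real integral bound
  have hreal : ∫ y in P.set, |f y - m| ≤
      (2 ^ (j+2) * Q.side) ^ n * ((2 ^ n * (j:ℝ) + (2 * 2 ^ n + 1 / s + 1)) * a) := by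
    have hmono : ∫ y in P.set, |f y - m| ≤
        ∫ y in P.set, (|f y - cP| + (((j+2 : ℕ) : ℝ) * (2 ^ n * a) + a / s)) := by
      apply integral_mono habs2 (habs.add (integrableOn_const P.volume_set_ne_top))
      intro y
      calc |f y - m| ≤ |f y - cP| + |cP - m| := abs_sub_le _ _ _
        _ ≤ |f y - cP| + (((j+2 : ℕ) : ℝ) * (2 ^ n * a) + a / s) := by linarith
    have hsplit : ∫ y in P.set, (|f y - cP| + (((j+2 : ℕ) : ℝ) * (2 ^ n * a) + a / s)) =
        (∫ y in P.set, |f y - cP|) + (volume P.set).toReal *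
          (((j+2 : ℕ) : ℝ) * (2 ^ n * a) + a / s) := by
      rw [integral_add habs (integrableOn_const P.volume_set_ne_top),
        setIntegral_const, smul_eq_mul, measureReal_def]
    have hO : ∫ y in P.set, |f y - cP| ≤ (volume P.set).toReal * a :=
      integral_abs_sub_avg_le f P hyP hA
    rw [hsplit] at hmono
    rw [hVP] at hmono hO
    calc ∫ y in P.set, |f y - m| ≤ _ := hmono
      _ ≤ (2 ^ (j+2) * Q.side) ^ n * ((2 ^ n * (j:ℝ) + (2 * 2 ^ n + 1 / s + 1)) * a) := by
          have hre : (2 ^ (j+2) * Q.side) ^ n * ((2 ^ n * (j:ℝ) + (2 * 2 ^ n + 1 / s + 1)) * a)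
              = (2 ^ (j+2) * Q.side) ^ n * a +
                (2 ^ (j+2) * Q.side) ^ n * (((j+2 : ℕ) : ℝ) * (2 ^ n * a) + a / s) := by
            push_cast
            ring
          rw [hre]
          linarith
  -- lintegral
  have hlint : ∫⁻ y in P.set, ENNReal.ofReal |f y - m| =
      ENNReal.ofReal (∫ y in P.set, |f y - m|) := by
    rw [ofReal_integral_eq_lintegral_ofReal habs2]
    filter_upwards with y using abs_nonneg _
  rw [hlint]
  exact ENNReal.ofReal_le_ofReal hreal
theorem decay_bound {δ : ℝ} (hδ : 0 < δ) {E F : ℝ} (hE : 0 ≤ E) (hF : 0 ≤ F) (j : ℕ) :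
    ((2:ℝ) ^ j) ^ (-δ) * (E * j + F) ≤
      (F + E / ((2:ℝ) ^ (δ/2) - 1)) * ((2:ℝ) ^ (-(δ/2))) ^ j := by
  set q := (2:ℝ) ^ (-(δ/2)) with hq_def
  have hq0 : 0 < q := Real.rpow_pos_of_pos two_pos _
  have hgt : (1:ℝ) < (2:ℝ) ^ (δ/2) :=
    Real.one_lt_rpow_iff_of_pos two_pos |>.mpr (Or.inl ⟨one_lt_two, by linarith⟩)
  set u := (2:ℝ) ^ (δ/2) - 1 with hu_def
  have hu0 : 0 < u := by rw [hu_def]; linarith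
  have hq1 : q * (1 + u) = 1 := by
    rw [hq_def, hu_def]
    have : (1:ℝ) + ((2:ℝ) ^ (δ/2) - 1) = (2:ℝ) ^ (δ/2) := by ring
    rw [this, ← Real.rpow_add two_pos]
    norm_num
  have key1 : ((2:ℝ) ^ j) ^ (-δ) = q ^ j * q ^ j := by
    rw [hq_def, ← Real.rpow_natCast ((2:ℝ) ^ (-(δ/2))) j,
      ← Real.rpow_mul (by norm_num : (0:ℝ) ≤ 2),
      ← Real.rpow_add two_pos, ← Real.rpow_natCast (2:ℝ) j,
      ← Real.rpow_mul (by norm_num : (0:ℝ) ≤ 2)]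
    congr 1
    ring
  have hpow : (1:ℝ) + j * u ≤ (1 + u) ^ j := one_add_mul_le_pow (by linarith) j
  have hD0 : 0 ≤ F + E / u := by positivity
  have key2 : q ^ j * (E * j + F) ≤ F + E / u := by
    have hstep : E * j + F ≤ (F + E / u) * (1 + j * u) := by
      have hexp : (F + E / u) * (1 + j * u) = F + E / u + F * j * u + E / u * u * j := by
        ring
      have hEu : E / u * u = E := div_mul_cancel₀ E hu0.ne'
      rw [hexp, hEu]
      have h1 : 0 ≤ E / u := by positivity
      have h2 : 0 ≤ F * j * u := by positivity
      nlinarith [h1, h2]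
    calc q ^ j * (E * j + F) ≤ q ^ j * ((F + E / u) * (1 + j * u)) := by
          apply mul_le_mul_of_nonneg_left hstep (pow_nonneg hq0.le j)
      _ ≤ q ^ j * ((F + E / u) * (1 + u) ^ j) := by
          apply mul_le_mul_of_nonneg_left _ (pow_nonneg hq0.le j)
          exact mul_le_mul_of_nonneg_left hpow hD0
      _ = (F + E / u) * (q * (1 + u)) ^ j := by rw [mul_pow]; ring
      _ = F + E / u := by rw [hq1, one_pow, mul_one]
  calc ((2:ℝ) ^ j) ^ (-δ) * (E * j + F) = q ^ j * (q ^ j * (E * j + F)) := by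
        rw [key1]; ring
    _ ≤ q ^ j * (F + E / u) := mul_le_mul_of_nonneg_left key2 (pow_nonneg hq0.le j)
    _ = (F + E / u) * q ^ j := mul_comm _ _

theorem W_bound (n : ℕ) {δ s side a : ℝ} (hδ : 0 < δ) (hside : 0 < side) (ha : 0 ≤ a)
    (hs0 : 0 < s) (j : ℕ) :
    (((2:ℝ) ^ (j+1) * side / 4) ^ ((n:ℝ) + δ))⁻¹ *
      (((2:ℝ) ^ (j+2) * side) ^ n * ((2 ^ n * (j:ℝ) + (2 * 2 ^ n + 1/s + 1)) * a)) ≤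
    ((2:ℝ) ^ ((n:ℝ) + δ) * 4 ^ n *
        ((2 * 2 ^ n + 1/s + 1) + 2 ^ n / ((2:ℝ) ^ (δ/2) - 1)) * a * side ^ (-δ)) *
      ((2:ℝ) ^ (-(δ/2))) ^ j := by
  set T := (2:ℝ) ^ j with hT_def
  have hT : (0:ℝ) < T := two_pow_pos j
  have hbase : (2:ℝ) ^ (j+1) * side / 4 = T * (side/2) := by
    rw [hT_def, pow_succ]; ring
  have hbase2 : (2:ℝ) ^ (j+2) * side = T * (4*side) := by
    rw [hT_def, pow_succ, pow_succ]; ring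
  have e1 : (((2:ℝ) ^ (j+1) * side / 4) ^ ((n:ℝ) + δ))⁻¹
      = T ^ (-((n:ℝ)+δ)) * (side/2) ^ (-((n:ℝ)+δ)) := by
    rw [hbase, Real.mul_rpow hT.le (by positivity), mul_inv,
      ← Real.rpow_neg hT.le, ← Real.rpow_neg (by positivity)]
  have e2 : T ^ (-((n:ℝ)+δ)) * T ^ (n:ℝ) = T ^ (-δ) := by
    rw [← Real.rpow_add hT]; congr 1; ring
  have e3 : (side/2) ^ (-((n:ℝ)+δ)) * side ^ (n:ℝ) =
      (2:ℝ) ^ ((n:ℝ)+δ) * side ^ (-δ) := by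
    have h1 : (side/2) ^ (-((n:ℝ)+δ)) = side ^ (-((n:ℝ)+δ)) * (2:ℝ) ^ ((n:ℝ)+δ) := by
      rw [div_eq_mul_inv, Real.mul_rpow hside.le (inv_nonneg.mpr two_pos.le),
        Real.inv_rpow two_pos.le, Real.rpow_neg two_pos.le, inv_inv]
    have h2 : side ^ (-((n:ℝ)+δ)) * side ^ (n:ℝ) = side ^ (-δ) := by
      rw [← Real.rpow_add hside]; congr 1; ring
    calc (side/2) ^ (-((n:ℝ)+δ)) * side ^ (n:ℝ)
        = side ^ (-((n:ℝ)+δ)) * (2:ℝ) ^ ((n:ℝ)+δ) * side ^ (n:ℝ) := by rw [h1]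
      _ = side ^ (-((n:ℝ)+δ)) * side ^ (n:ℝ) * (2:ℝ) ^ ((n:ℝ)+δ) := by ring
      _ = (2:ℝ) ^ ((n:ℝ)+δ) * side ^ (-δ) := by rw [h2]; ring
  have e4 : ((2:ℝ) ^ (j+2) * side) ^ n = T ^ (n:ℝ) * (4 ^ n * side ^ (n:ℝ)) := by
    rw [hbase2, mul_pow, mul_pow, Real.rpow_natCast, Real.rpow_natCast]
  have hEq : (((2:ℝ) ^ (j+1) * side / 4) ^ ((n:ℝ) + δ))⁻¹ *
      (((2:ℝ) ^ (j+2) * side) ^ n * ((2 ^ n * (j:ℝ) + (2 * 2 ^ n + 1/s + 1)) * a)) =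
      ((2:ℝ) ^ ((n:ℝ)+δ) * 4 ^ n * side ^ (-δ) * a) *
        (T ^ (-δ) * (2 ^ n * (j:ℝ) + (2 * 2 ^ n + 1/s + 1))) := by
    calc (((2:ℝ) ^ (j+1) * side / 4) ^ ((n:ℝ) + δ))⁻¹ *
        (((2:ℝ) ^ (j+2) * side) ^ n * ((2 ^ n * (j:ℝ) + (2 * 2 ^ n + 1/s + 1)) * a))
        = (T ^ (-((n:ℝ)+δ)) * T ^ (n:ℝ)) * ((side/2) ^ (-((n:ℝ)+δ)) * side ^ (n:ℝ)) *
          (4 ^ n * ((2 ^ n * (j:ℝ) + (2 * 2 ^ n + 1/s + 1)) * a)) := by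
          rw [e1, e4]; ring
      _ = T ^ (-δ) * ((2:ℝ) ^ ((n:ℝ)+δ) * side ^ (-δ)) *
          (4 ^ n * ((2 ^ n * (j:ℝ) + (2 * 2 ^ n + 1/s + 1)) * a)) := by rw [e2, e3]
      _ = ((2:ℝ) ^ ((n:ℝ)+δ) * 4 ^ n * side ^ (-δ) * a) *
          (T ^ (-δ) * (2 ^ n * (j:ℝ) + (2 * 2 ^ n + 1/s + 1))) := by ring
  rw [hEq]
  have hdec := decay_bound hδ (E := (2:ℝ)^n) (F := 2 * 2 ^ n + 1/s + 1)
    (by positivity) (by positivity) j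
  rw [← hT_def] at hdec
  have hc0 : (0:ℝ) ≤ (2:ℝ) ^ ((n:ℝ)+δ) * 4 ^ n * side ^ (-δ) * a := by positivity
  calc ((2:ℝ) ^ ((n:ℝ)+δ) * 4 ^ n * side ^ (-δ) * a) *
        (T ^ (-δ) * (2 ^ n * (j:ℝ) + (2 * 2 ^ n + 1/s + 1)))
      ≤ ((2:ℝ) ^ ((n:ℝ)+δ) * 4 ^ n * side ^ (-δ) * a) *
        (((2 * 2 ^ n + 1/s + 1) + 2 ^ n / ((2:ℝ) ^ (δ/2) - 1)) *
          ((2:ℝ) ^ (-(δ/2))) ^ j) := mul_le_mul_of_nonneg_left hdec hc0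
    _ = ((2:ℝ) ^ ((n:ℝ) + δ) * 4 ^ n *
        ((2 * 2 ^ n + 1/s + 1) + 2 ^ n / ((2:ℝ) ^ (δ/2) - 1)) * a * side ^ (-δ)) *
      ((2:ℝ) ^ (-(δ/2))) ^ j := by ring

/-- For a kernel `k` with the Hölder-type regularity, `0 < s ≤ 1/2`,
`1/2 ≤ t ≤ 1 − s`, a cube `Q` with center `x_Q`, and `f` locally integrable with
`∫_{(2Q)^c} |f(y) − m_f(t,Q)|/|z−y|^{n+δ} dy < ∞` for `z ∈ Q`, there is `c = c_{n,δ,s}`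
such that for every `z ∈ Q`:
`|∫_{(2Q)^c} (k(z,y) − k(x_Q,y))(f(y) − m_f(t,Q)) dy| ≤ c inf_{y ∈ Q} M♯f(y)`. -/
theorem statement7 {n : ℕ} (k : Sp n → Sp n → ℝ)
    (hkm : Measurable (Function.uncurry k)) (C δ : ℝ) (hC : 0 < C) (hδ : 0 < δ)
    (hker : ∀ (Q : Cube n), ∀ x ∈ Q.set, ∀ x' ∈ Q.set,
      ∀ y ∉ (Q.dilate 2 (by norm_num)).set,
        |k x y - k x' y| ≤ C * ‖x - x'‖ ^ δ / ‖x - y‖ ^ ((n : ℝ) + δ))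
    (s t : ℝ) (hs0 : 0 < s) (hs : s ≤ 1 / 2) (ht : 1 / 2 ≤ t) (ht1 : t ≤ 1 - s) :
    ∃ c : ℝ, 0 < c ∧
      ∀ (Q : Cube n) (f : Sp n → ℝ), LocallyIntegrable f volume →
        (∀ z ∈ Q.set,
          IntegrableOn
            (fun y => |f y - median f t Q| / ‖z - y‖ ^ ((n : ℝ) + δ))
            ((Q.dilate 2 (by norm_num)).set)ᶜ volume) →
        ∀ z ∈ Q.set,
          ENNReal.ofReal
              |∫ y in ((Q.dilate 2 (by norm_num)).set)ᶜ,
                  (k z y - k Q.center y) * (f y - median f t Q)|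
            ≤ ENNReal.ofReal c * ⨅ y : Q.set, fsSharp f ↑y := by
  have hgt : (1:ℝ) < (2:ℝ) ^ (δ/2) :=
    Real.one_lt_rpow_iff_of_pos two_pos |>.mpr (Or.inl ⟨one_lt_two, by linarith⟩)
  set q := (2:ℝ) ^ (-(δ/2)) with hq_def
  have hq0 : 0 < q := Real.rpow_pos_of_pos two_pos _
  have hq1 : q < 1 := Real.rpow_lt_one_of_one_lt_of_neg one_lt_two (by linarith)
  set D := ((2:ℝ) * 2 ^ n + 1/s + 1) + 2 ^ n / ((2:ℝ) ^ (δ/2) - 1) with hD_def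
  have hD0 : 0 < D := by
    have h1 : (0:ℝ) < 2 * 2 ^ n + 1/s + 1 := by positivity
    have h2 : (0:ℝ) ≤ 2 ^ n / ((2:ℝ) ^ (δ/2) - 1) := by
      apply div_nonneg (by positivity); linarith
    rw [hD_def]; linarith
  set K := (2:ℝ) ^ ((n:ℝ)+δ) * 4 ^ n * D with hK_def
  have hK0 : 0 < K := by
    apply mul_pos (mul_pos (Real.rpow_pos_of_pos two_pos _) (by positivity)) hD0
  have hsqrt : (0:ℝ) < Real.sqrt n + 1 := by positivity
  set c := C * (Real.sqrt n + 1) ^ δ * (K * (1 - q)⁻¹) with hc_def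
  have hc0 : 0 < c := by
    apply mul_pos (mul_pos hC (Real.rpow_pos_of_pos hsqrt _))
    apply mul_pos hK0 (inv_pos.mpr (by linarith))
  refine ⟨c, hc0, ?_⟩
  intro Q f hf _hint z hz
  haveI : Nonempty Q.set := ⟨⟨Q.center, Q.center_mem_set⟩⟩
  rw [ENNReal.mul_iInf_of_ne (ENNReal.ofReal_pos.mpr hc0).ne' ENNReal.ofReal_ne_top]
  apply le_iInf
  rintro ⟨y₀, hy₀⟩
  simp only
  by_cases hA : fsSharp f y₀ = ⊤
  · rw [hA, ENNReal.mul_top (ENNReal.ofReal_pos.mpr hc0).ne']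
    exact le_top
  set m := median f t Q with hm_def
  set a := (fsSharp f y₀).toReal with ha_def
  have ha : 0 ≤ a := ENNReal.toReal_nonneg
  have hside := Q.side_pos
  set S := (Q.dilate 2 (by norm_num : (0:ℝ) < 2)).set with hS_def
  set G := ∫⁻ y in Sᶜ, ENNReal.ofReal (|f y - m| / ‖z - y‖ ^ ((n : ℝ) + δ)) with hG_def
  -- Step A : bound G
  set A : ℕ → Set (Sp n) := fun j =>
    (Q.dilate (2 ^ (j+2)) (two_pow_pos (j+2))).set \
      (Q.dilate (2 ^ (j+1)) (two_pow_pos (j+1))).set with hA_def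
  have hcover : Sᶜ ⊆ ⋃ j, A j := by
    intro x hx
    obtain ⟨j, h1, h2⟩ := mem_scale_exists Q (by norm_num) hx
    exact Set.mem_iUnion.mpr ⟨j, h1, h2⟩
  have hGj : ∀ j : ℕ,
      (∫⁻ y in A j, ENNReal.ofReal (|f y - m| / ‖z - y‖ ^ ((n : ℝ) + δ))) ≤
        ENNReal.ofReal (K * a * Q.side ^ (-δ)) * (ENNReal.ofReal q) ^ j := by
    intro j
    set X := ((2:ℝ) ^ (j+1) * Q.side / 4) ^ ((n:ℝ) + δ) with hX_def
    have hR0 : (0:ℝ) < 2 ^ (j+1) * Q.side / 4 := by positivity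
    have hX0 : 0 < X := Real.rpow_pos_of_pos hR0 _
    have hmeasA : MeasurableSet (A j) :=
      (Cube.measurableSet_set _).diff (Cube.measurableSet_set _)
    have hpt : ∀ y ∈ A j, ENNReal.ofReal (|f y - m| / ‖z - y‖ ^ ((n : ℝ) + δ)) ≤
        ENNReal.ofReal X⁻¹ * ENNReal.ofReal |f y - m| := by
      intro y hyA
      have hylow : 2 ^ (j+1) * Q.side / 4 ≤ ‖z - y‖ := norm_lb Q hz hyA.2
      have hXle : X ≤ ‖z - y‖ ^ ((n : ℝ) + δ) :=
        Real.rpow_le_rpow hR0.le hylow (by positivity)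
      have hdivle : |f y - m| / ‖z - y‖ ^ ((n : ℝ) + δ) ≤ X⁻¹ * |f y - m| := by
        rw [← div_eq_inv_mul]
        exact div_le_div_of_nonneg_left (abs_nonneg _) hX0 hXle
      calc ENNReal.ofReal (|f y - m| / ‖z - y‖ ^ ((n : ℝ) + δ))
          ≤ ENNReal.ofReal (X⁻¹ * |f y - m|) := ENNReal.ofReal_le_ofReal hdivle
        _ = ENNReal.ofReal X⁻¹ * ENNReal.ofReal |f y - m| :=
            ENNReal.ofReal_mul (inv_nonneg.mpr hX0.le)
    calc (∫⁻ y in A j, ENNReal.ofReal (|f y - m| / ‖z - y‖ ^ ((n : ℝ) + δ)))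
        ≤ ∫⁻ y in A j, ENNReal.ofReal X⁻¹ * ENNReal.ofReal |f y - m| :=
          setLIntegral_mono' hmeasA hpt
      _ = ENNReal.ofReal X⁻¹ * ∫⁻ y in A j, ENNReal.ofReal |f y - m| :=
          lintegral_const_mul' _ _ ENNReal.ofReal_ne_top
      _ ≤ ENNReal.ofReal X⁻¹ *
          ∫⁻ y in (Q.dilate (2 ^ (j+2)) (two_pow_pos (j+2))).set, ENNReal.ofReal |f y - m| :=
          mul_le_mul_right (lintegral_mono_set Set.diff_subset) _
      _ ≤ ENNReal.ofReal X⁻¹ * ENNReal.ofReal ((2 ^ (j+2) * Q.side) ^ n *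
            ((2 ^ n * (j:ℝ) + (2 * 2 ^ n + 1 / s + 1)) * a)) :=
          mul_le_mul_right (lint_cube hf hs0 hs ht ht1 Q hy₀ hA j) _
      _ = ENNReal.ofReal (X⁻¹ * ((2 ^ (j+2) * Q.side) ^ n *
            ((2 ^ n * (j:ℝ) + (2 * 2 ^ n + 1 / s + 1)) * a))) :=
          (ENNReal.ofReal_mul (inv_nonneg.mpr hX0.le)).symm
      _ ≤ ENNReal.ofReal ((K * a * Q.side ^ (-δ)) * q ^ j) := by
          apply ENNReal.ofReal_le_ofReal
          have hW := W_bound n hδ hside ha hs0 j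
          rw [← hX_def] at hW
          refine hW.trans (le_of_eq ?_)
          rw [hK_def, hD_def, hq_def]
      _ = ENNReal.ofReal (K * a * Q.side ^ (-δ)) * (ENNReal.ofReal q) ^ j := by
          rw [ENNReal.ofReal_mul (mul_nonneg (mul_nonneg hK0.le ha)
            (Real.rpow_nonneg hside.le _)), ENNReal.ofReal_pow hq0.le]
  have hGbound : G ≤ ENNReal.ofReal (K * a * Q.side ^ (-δ) * (1 - q)⁻¹) := by
    calc G ≤ ∫⁻ y in ⋃ j, A j, ENNReal.ofReal (|f y - m| / ‖z - y‖ ^ ((n : ℝ) + δ)) :=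
          lintegral_mono_set hcover
      _ ≤ ∑' j : ℕ, ∫⁻ y in A j, ENNReal.ofReal (|f y - m| / ‖z - y‖ ^ ((n : ℝ) + δ)) :=
          lintegral_iUnion_le _ _
      _ ≤ ∑' j : ℕ, ENNReal.ofReal (K * a * Q.side ^ (-δ)) * (ENNReal.ofReal q) ^ j :=
          ENNReal.tsum_le_tsum hGj
      _ = ENNReal.ofReal (K * a * Q.side ^ (-δ)) * ∑' j : ℕ, (ENNReal.ofReal q) ^ j :=
          ENNReal.tsum_mul_left
      _ = ENNReal.ofReal (K * a * Q.side ^ (-δ)) * (1 - ENNReal.ofReal q)⁻¹ := by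
          rw [ENNReal.tsum_geometric]
      _ = ENNReal.ofReal (K * a * Q.side ^ (-δ) * (1 - q)⁻¹) := by
          rw [show (1:ℝ≥0∞) - ENNReal.ofReal q = ENNReal.ofReal (1 - q) by
              rw [ENNReal.ofReal_sub 1 hq0.le, ENNReal.ofReal_one],
            ← ENNReal.ofReal_inv_of_pos (by linarith : (0:ℝ) < 1 - q),
            ← ENNReal.ofReal_mul (mul_nonneg (mul_nonneg hK0.le ha)
              (Real.rpow_nonneg hside.le _))]
  -- Step B : kernel bound
  set L := ∫⁻ y in Sᶜ, ENNReal.ofReal ‖(k z y - k Q.center y) * (f y - m)‖ with hL_def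
  have hc1 : (0:ℝ) ≤ C * ‖z - Q.center‖ ^ δ :=
    mul_nonneg hC.le (Real.rpow_nonneg (norm_nonneg _) _)
  have hLG : L ≤ ENNReal.ofReal (C * ‖z - Q.center‖ ^ δ) * G := by
    rw [hL_def, hG_def]
    calc (∫⁻ y in Sᶜ, ENNReal.ofReal ‖(k z y - k Q.center y) * (f y - m)‖)
        ≤ ∫⁻ y in Sᶜ, ENNReal.ofReal (C * ‖z - Q.center‖ ^ δ) *
            ENNReal.ofReal (|f y - m| / ‖z - y‖ ^ ((n : ℝ) + δ)) := by
          apply setLIntegral_mono' (Cube.measurableSet_set _).compl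
          intro y hy
          have hk := hker Q z hz Q.center Q.center_mem_set y hy
          have h1 : ‖(k z y - k Q.center y) * (f y - m)‖ ≤
              (C * ‖z - Q.center‖ ^ δ) * (|f y - m| / ‖z - y‖ ^ ((n : ℝ) + δ)) := by
            rw [Real.norm_eq_abs, abs_mul]
            calc |k z y - k Q.center y| * |f y - m|
                ≤ (C * ‖z - Q.center‖ ^ δ / ‖z - y‖ ^ ((n : ℝ) + δ)) * |f y - m| :=
                  mul_le_mul_of_nonneg_right hk (abs_nonneg _)
              _ = (C * ‖z - Q.center‖ ^ δ) * (|f y - m| / ‖z - y‖ ^ ((n : ℝ) + δ)) := by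
                  ring
          calc ENNReal.ofReal ‖(k z y - k Q.center y) * (f y - m)‖
              ≤ ENNReal.ofReal ((C * ‖z - Q.center‖ ^ δ) *
                  (|f y - m| / ‖z - y‖ ^ ((n : ℝ) + δ))) := ENNReal.ofReal_le_ofReal h1
            _ = ENNReal.ofReal (C * ‖z - Q.center‖ ^ δ) *
                  ENNReal.ofReal (|f y - m| / ‖z - y‖ ^ ((n : ℝ) + δ)) :=
                ENNReal.ofReal_mul hc1
      _ = ENNReal.ofReal (C * ‖z - Q.center‖ ^ δ) *
            ∫⁻ y in Sᶜ, ENNReal.ofReal (|f y - m| / ‖z - y‖ ^ ((n : ℝ) + δ)) :=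
          lintegral_const_mul' _ _ ENNReal.ofReal_ne_top
  -- Step C : norm bound
  have hnorm : ‖z - Q.center‖ ≤ (Real.sqrt n + 1) * Q.side := by
    have h1 : ‖z - Q.center‖ ≤ Real.sqrt n * Q.side := by
      apply norm_le_of_coords _ _ hside.le
      intro i
      have := (Q.mem_set_iff_abs z).mp hz i
      calc |(z - Q.center) i| = |z i - Q.center i| := rfl
        _ ≤ Q.side / 2 := this
        _ ≤ Q.side := by linarith
    have h2 : Real.sqrt n * Q.side ≤ (Real.sqrt n + 1) * Q.side := by nlinarith
    linarith
  have hCle : C * ‖z - Q.center‖ ^ δ ≤ C * ((Real.sqrt n + 1) * Q.side) ^ δ := by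
    apply mul_le_mul_of_nonneg_left _ hC.le
    exact Real.rpow_le_rpow (norm_nonneg _) hnorm hδ.le
  -- Step D : combine
  have hfinal : ENNReal.ofReal (C * ((Real.sqrt n + 1) * Q.side) ^ δ) *
      ENNReal.ofReal (K * a * Q.side ^ (-δ) * (1 - q)⁻¹) = ENNReal.ofReal (c * a) := by
    rw [← ENNReal.ofReal_mul (mul_nonneg hC.le (Real.rpow_nonneg
      (mul_nonneg hsqrt.le hside.le) _))]
    congr 1
    have hsplit : ((Real.sqrt n + 1) * Q.side) ^ δ =
        (Real.sqrt n + 1) ^ δ * Q.side ^ δ := Real.mul_rpow hsqrt.le hside.le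
    have hcancel : Q.side ^ δ * Q.side ^ (-δ) = 1 := by
      rw [← Real.rpow_add hside]
      norm_num
    calc C * ((Real.sqrt n + 1) * Q.side) ^ δ * (K * a * Q.side ^ (-δ) * (1 - q)⁻¹)
        = (C * (Real.sqrt n + 1) ^ δ * (K * (1 - q)⁻¹)) * a *
            (Q.side ^ δ * Q.side ^ (-δ)) := by rw [hsplit]; ring
      _ = c * a := by rw [hcancel, hc_def]; ring
  have hLbound : L ≤ ENNReal.ofReal (c * a) := by
    calc L ≤ ENNReal.ofReal (C * ‖z - Q.center‖ ^ δ) * G := hLG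
      _ ≤ ENNReal.ofReal (C * ((Real.sqrt n + 1) * Q.side) ^ δ) *
          ENNReal.ofReal (K * a * Q.side ^ (-δ) * (1 - q)⁻¹) :=
          mul_le_mul' (ENNReal.ofReal_le_ofReal hCle) hGbound
      _ = ENNReal.ofReal (c * a) := hfinal
  -- Step E : conclude
  have hIle : |∫ y in Sᶜ, (k z y - k Q.center y) * (f y - m)| ≤ L.toReal := by
    rw [← Real.norm_eq_abs]
    exact MeasureTheory.norm_integral_le_lintegral_norm _
  calc ENNReal.ofReal |∫ y in Sᶜ, (k z y - k Q.center y) * (f y - m)|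
      ≤ ENNReal.ofReal L.toReal := ENNReal.ofReal_le_ofReal hIle
    _ ≤ L := ENNReal.ofReal_toReal_le
    _ ≤ ENNReal.ofReal (c * a) := hLbound
    _ = ENNReal.ofReal c * ENNReal.ofReal a := ENNReal.ofReal_mul hc0.le
    _ = ENNReal.ofReal c * fsSharp f y₀ := by rw [ha_def, ENNReal.ofReal_toReal hA]

end LocalMedian
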